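/- Let X ~ NB(μ, b) and suppose that conditional on X = x, X1 ~ BetaBinomial(x, εb', (1-ε)b') for b' > 0, ε ∈ (0,1). Then Var(X1) = ε Var(X) + ε(1-ε)(μ²/b)((b+1)/(b'+1) − 1), where Var(X) = μ + μ²/b. -/

import Mathlib

/-- The negative binomial pmf in the mean/overdispersion parameterization `NB(μ, b)`. -/
noncomputable def nbPMF (μ b : ℝ) (k : ℕ) : ℝ :=
  Real.Gamma (k + b) / (Real.Gamma b * (Nat.factorial k)) *
    (μ / (μ + b)) ^ k * (b / (μ + b)) ^ b

/-- The beta function `B(a, c) = Γ(a) Γ(c) / Γ(a + c)`. -/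
noncomputable def betaFn (a c : ℝ) : ℝ :=
  Real.Gamma a * Real.Gamma c / Real.Gamma (a + c)

/-- The beta-binomial pmf with `n` trials and shape parameters `a, c`, evaluated at `k`. -/
noncomputable def betaBinomPMF (n : ℕ) (a c : ℝ) (k : ℕ) : ℝ :=
  (n.choose k) * betaFn ((k : ℝ) + a) (((n - k : ℕ) : ℝ) + c) / betaFn a c


open Real MeasureTheory Filter Set Finset

lemma hasSum_gammaSeries {c p : ℝ} (hc : 0 < c) (hp0 : 0 < p) (hp1 : p < 1) :
    HasSum (fun k : ℕ => Real.Gamma (k + c) / (Real.Gamma c * (Nat.factorial k)) * p ^ k)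
      ((1 - p) ^ (-c)) := by
  set a : ℕ → ℝ := fun k => Real.Gamma (k + c) / (Real.Gamma c * (Nat.factorial k)) * p ^ k with ha
  have hcpos : 0 < Real.Gamma c := Real.Gamma_pos_of_pos hc
  have hkc : ∀ k : ℕ, (0:ℝ) < k + c := fun k => by positivity
  have hapos : ∀ k, 0 < a k := by
    intro k
    have := Real.Gamma_pos_of_pos (hkc k)
    have : (0:ℝ) < Nat.factorial k := by positivity
    simp only [ha]
    positivity
  have key : ∀ k : ℕ, a (k + 1) = a k * ((k + c) / (k + 1) * p) := by
    intro k
    simp only [ha]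
    have h1 : ((k + 1 : ℕ) : ℝ) + c = ((k : ℝ) + c) + 1 := by push_cast; ring
    rw [h1, Real.Gamma_add_one (ne_of_gt (hkc k)), Nat.factorial_succ]
    have hf : (0:ℝ) < Nat.factorial k := by positivity
    have h2 : (0:ℝ) < (k:ℝ) + 1 := by positivity
    push_cast
    field_simp
    ring
  have hsum : Summable a := by
    apply summable_of_ratio_test_tendsto_lt_one hp1
      (Eventually.of_forall fun k => (hapos k).ne')
    have heq : ∀ k : ℕ, ‖a (k + 1)‖ / ‖a k‖ = (1 + (c - 1) / ((k:ℝ) + 1)) * p := by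
      intro k
      have h2 : (0:ℝ) < (k:ℝ) + 1 := by positivity
      rw [key k, norm_mul, Real.norm_eq_abs, Real.norm_eq_abs, mul_comm, mul_div_assoc,
        div_self (abs_ne_zero.mpr (hapos k).ne'), mul_one,
        abs_of_nonneg (by positivity : (0:ℝ) ≤ ((k:ℝ) + c) / ((k:ℝ)+1) * p)]
      field_simp
      ring
    simp only [heq]
    have h1 : Tendsto (fun k : ℕ => ((k:ℝ) + 1)) atTop atTop :=
      tendsto_atTop_add_const_right _ 1 tendsto_natCast_atTop_atTop
    have h0 : Tendsto (fun k : ℕ => (c - 1) / ((k:ℝ) + 1)) atTop (nhds 0) :=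
      Tendsto.div_atTop tendsto_const_nhds h1
    have h3 : Tendsto (fun k : ℕ => (1 + (c - 1) / ((k:ℝ) + 1)) * p) atTop (nhds ((1 + 0) * p)) :=
      ((tendsto_const_nhds (x := (1:ℝ))).add h0).mul tendsto_const_nhds
    simpa using h3
  -- now compute the value of the sum
  set F : ℕ → ℝ → ℝ := fun k t => p ^ k / (Nat.factorial k) * (Real.exp (-t) * t ^ ((k:ℝ) + c - 1))
    with hF
  have hFint : ∀ k : ℕ, IntegrableOn (F k) (Ioi 0) := fun k =>
    (Real.GammaIntegral_convergent (hkc k)).const_mul _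
  have hFeq : ∀ k : ℕ, (∫ t in Ioi 0, F k t) = Real.Gamma c * a k := by
    intro k
    rw [hF]
    simp only
    rw [MeasureTheory.integral_const_mul, ← Real.Gamma_eq_integral (hkc k)]
    simp only [ha]
    have hf : (0:ℝ) < Nat.factorial k := by positivity
    field_simp
  have hnorm : Summable (fun k => ∫ t in Ioi 0, ‖F k t‖) := by
    have : ∀ k : ℕ, (∫ t in Ioi 0, ‖F k t‖) = Real.Gamma c * a k := by
      intro k
      rw [← hFeq k]
      apply integral_congr_ae
      filter_upwards [ae_restrict_mem measurableSet_Ioi] with t ht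
      exact norm_of_nonneg (by
        have : (0:ℝ) < t := ht
        have := Real.rpow_pos_of_pos this ((k:ℝ) + c - 1)
        positivity)
    simp only [this]
    exact hsum.mul_left _
  have swap := MeasureTheory.integral_tsum_of_summable_integral_norm hFint hnorm
  have hlhs : ∑' k, (∫ t in Ioi 0, F k t) = Real.Gamma c * ∑' k, a k := by
    simp only [hFeq]; exact tsum_mul_left
  have hpt : ∀ t ∈ Ioi (0:ℝ), (∑' k, F k t) = Real.exp (p * t) * (Real.exp (-t) * t ^ (c - 1)) := by
    intro t ht
    have ht0 : (0:ℝ) < t := ht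
    have hFt : ∀ k : ℕ, F k t = (Real.exp (-t) * t ^ (c - 1)) * ((p * t) ^ k / (Nat.factorial k)) := by
      intro k
      rw [hF]
      simp only
      have : ((k:ℝ) + c - 1) = (k:ℝ) + (c - 1) := by ring
      rw [this, Real.rpow_add ht0, Real.rpow_natCast, mul_pow]
      ring
    simp only [hFt]
    rw [tsum_mul_left]
    have : ∑' k : ℕ, ((p*t) ^ k / (Nat.factorial k) : ℝ) = Real.exp (p * t) := by
      rw [Real.exp_eq_exp_ℝ, NormedSpace.exp_eq_tsum_div]
    rw [this]; ring
  have hrhs : (∫ t in Ioi 0, (∑' k, F k t))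
      = (1 / (1 - p)) ^ (c:ℝ) * Real.Gamma c := by
    rw [setIntegral_congr_fun measurableSet_Ioi hpt]
    rw [← Real.integral_rpow_mul_exp_neg_mul_Ioi hc (by linarith : (0:ℝ) < 1 - p)]
    apply setIntegral_congr_fun measurableSet_Ioi
    intro t ht
    simp only
    rw [show -((1-p)*t) = p*t + -t by ring, Real.exp_add]
    ring
  have hval : ∑' k, a k = (1 - p) ^ (-c) := by
    have h1p : (0:ℝ) < 1 - p := by linarith
    have := hlhs.symm.trans (swap.trans hrhs)
    have h2 : ((1:ℝ) / (1 - p)) ^ (c:ℝ) = (1 - p) ^ (-c) := by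
      rw [one_div, Real.inv_rpow h1p.le, ← Real.rpow_neg h1p.le]
    have hS : ∑' k, a k = (1/(1-p)) ^ (c:ℝ) :=
      mul_left_cancel₀ hcpos.ne' (this.trans (mul_comm _ _))
    rw [hS, h2]
  exact hval ▸ hsum.hasSum

section NB
variable {μ b : ℝ}

lemma q_pos (hμ : 0 < μ) (hb : 0 < b) : 0 < μ / (μ + b) := by positivity

lemma q_lt_one (hμ : 0 < μ) (hb : 0 < b) : μ / (μ + b) < 1 := by
  rw [div_lt_one (by positivity)]; linarith

lemma one_sub_q (hμ : 0 < μ) (hb : 0 < b) : 1 - μ / (μ + b) = b / (μ + b) := by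
  field_simp
  ring

lemma nb_hasSum (hμ : 0 < μ) (hb : 0 < b) : HasSum (nbPMF μ b) 1 := by
  have h := (hasSum_gammaSeries hb (q_pos hμ hb) (q_lt_one hμ hb)).mul_right
    ((b / (μ + b)) ^ b : ℝ)
  rw [one_sub_q hμ hb] at h
  have hpos : 0 < b / (μ + b) := by positivity
  have : (b / (μ + b)) ^ (-b) * (b / (μ + b)) ^ b = 1 := by
    rw [← Real.rpow_add hpos]; norm_num
  rw [this] at h
  exact h.congr_fun fun k => by rw [nbPMF]

lemma nb_hasSum_id (hμ : 0 < μ) (hb : 0 < b) : HasSum (fun x : ℕ => nbPMF μ b x * x) μ := by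
  have hq0 := q_pos hμ hb
  have hq1 := q_lt_one hμ hb
  have hb1 : (0:ℝ) < b + 1 := by linarith
  have h := (hasSum_gammaSeries hb1 hq0 hq1).mul_right
    ((b * (μ / (μ + b))) * (b / (μ + b)) ^ b : ℝ)
  rw [one_sub_q hμ hb] at h
  have hμb : (0:ℝ) < μ + b := by linarith
  have hpos : 0 < b / (μ + b) := by positivity
  have hval : (b / (μ + b)) ^ (-(b+1)) * ((b * (μ / (μ + b))) * (b / (μ + b)) ^ b) = μ := by
    have e1 : (b / (μ + b)) ^ (-(b+1)) * (b / (μ + b)) ^ b = (b / (μ + b))⁻¹ := by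
      rw [← Real.rpow_add hpos, show -(b+1) + b = -1 by ring, Real.rpow_neg_one]
    calc (b / (μ + b)) ^ (-(b+1)) * ((b * (μ / (μ + b))) * (b / (μ + b)) ^ b)
        = ((b / (μ + b)) ^ (-(b+1)) * (b / (μ + b)) ^ b) * (b * (μ / (μ + b))) := by ring
      _ = (b / (μ + b))⁻¹ * (b * (μ / (μ + b))) := by rw [e1]
      _ = μ := by field_simp
  rw [hval] at h
  have hshift : HasSum (fun j : ℕ => nbPMF μ b (j + 1) * ((j + 1 : ℕ) : ℝ)) μ := by
    apply h.congr_fun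
    intro j
    simp only [nbPMF]
    have hgb : Real.Gamma (b + 1) = b * Real.Gamma b := by
      rw [Real.Gamma_add_one hb.ne']
    have harg : ((j + 1 : ℕ) : ℝ) + b = ((j : ℝ) + b) + 1 := by push_cast; ring
    have harg2 : (j:ℝ) + (b + 1) = ((j:ℝ) + b) + 1 := by ring
    rw [harg2, Real.Gamma_add_one (by positivity : ((j:ℝ) + b) ≠ 0), hgb]
    rw [harg, Real.Gamma_add_one (by positivity : ((j:ℝ) + b) ≠ 0), Nat.factorial_succ]
    have hΓb : 0 < Real.Gamma b := Real.Gamma_pos_of_pos hb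
    have hf : (0:ℝ) < Nat.factorial j := by positivity
    have hμb' : μ + b ≠ 0 := hμb.ne'
    push_cast
    field_simp
    ring_nf
    field_simp
    ring
  have h2 := (hasSum_nat_add_iff (f := fun x : ℕ => nbPMF μ b x * x) 1).mp hshift
  simpa using h2

lemma nb_hasSum_sq (hμ : 0 < μ) (hb : 0 < b) : HasSum (fun x : ℕ => nbPMF μ b x * (x * (x - 1)))
    ((b + 1) * μ ^ 2 / b) := by
  have hq0 := q_pos hμ hb
  have hq1 := q_lt_one hμ hb
  have hb2 : (0:ℝ) < b + 2 := by linarith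
  have hμb : (0:ℝ) < μ + b := by linarith
  have hpos : 0 < b / (μ + b) := by positivity
  have h := (hasSum_gammaSeries hb2 hq0 hq1).mul_right
    ((b * (b+1) * (μ / (μ + b)) ^ (2:ℕ)) * (b / (μ + b)) ^ b : ℝ)
  rw [one_sub_q hμ hb] at h
  have hval : (b / (μ + b)) ^ (-(b+2)) * ((b * (b+1) * (μ / (μ + b)) ^ (2:ℕ)) * (b / (μ + b)) ^ b)
      = (b + 1) * μ ^ 2 / b := by
    have e1 : (b / (μ + b)) ^ (-(b+2)) * (b / (μ + b)) ^ b = ((b / (μ + b)) ^ (2:ℕ))⁻¹ := by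
      rw [← Real.rpow_add hpos, show -(b+2) + b = -(2:ℕ) by push_cast; ring,
        Real.rpow_neg hpos.le, Real.rpow_natCast]
    calc (b / (μ + b)) ^ (-(b+2)) * ((b * (b+1) * (μ / (μ + b)) ^ (2:ℕ)) * (b / (μ + b)) ^ b)
        = ((b / (μ + b)) ^ (-(b+2)) * (b / (μ + b)) ^ b) * (b * (b+1) * (μ / (μ + b)) ^ (2:ℕ)) := by
          ring
      _ = ((b / (μ + b)) ^ (2:ℕ))⁻¹ * (b * (b+1) * (μ / (μ + b)) ^ (2:ℕ)) := by rw [e1]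
      _ = (b + 1) * μ ^ 2 / b := by field_simp
  rw [hval] at h
  have hshift : HasSum (fun j : ℕ => nbPMF μ b (j + 2) * (((j + 2 : ℕ) : ℝ) * (((j + 2 : ℕ) : ℝ) - 1)))
      ((b + 1) * μ ^ 2 / b) := by
    apply h.congr_fun
    intro j
    simp only [nbPMF]
    have harg : ((j + 2 : ℕ) : ℝ) + b = (((j : ℝ) + b) + 1) + 1 := by push_cast; ring
    have harg2 : (j:ℝ) + (b + 2) = (((j:ℝ) + b) + 1) + 1 := by ring
    have hjb : ((j:ℝ) + b) ≠ 0 := by positivity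
    have hjb1 : ((j:ℝ) + b) + 1 ≠ 0 := by positivity
    have hgb2 : Real.Gamma (b + 2) = (b+1) * b * Real.Gamma b := by
      rw [show b + 2 = (b + 1) + 1 by ring, Real.Gamma_add_one (by positivity),
        Real.Gamma_add_one hb.ne']
      ring
    rw [harg2, Real.Gamma_add_one hjb1, Real.Gamma_add_one hjb, hgb2]
    rw [harg, Real.Gamma_add_one hjb1, Real.Gamma_add_one hjb]
    rw [show j + 2 = (j + 1) + 1 by ring, Nat.factorial_succ, Nat.factorial_succ]
    have hΓb : 0 < Real.Gamma b := Real.Gamma_pos_of_pos hb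
    have hf : (0:ℝ) < Nat.factorial j := by positivity
    have hμb' : μ + b ≠ 0 := hμb.ne'
    push_cast
    field_simp
    ring_nf
    field_simp
    ring
  have h2 := (hasSum_nat_add_iff (f := fun x : ℕ => nbPMF μ b x * (x * (x - 1))) 2).mp hshift
  have hz : ∑ i ∈ Finset.range 2, nbPMF μ b i * ((i:ℝ) * ((i:ℝ) - 1)) = 0 := by
    simp [Finset.sum_range_succ]
  rw [hz, add_zero] at h2
  exact h2

end NB

lemma betaFn_pos {a c : ℝ} (ha : 0 < a) (hc : 0 < c) : 0 < betaFn a c := by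
  have h1 := Real.Gamma_pos_of_pos ha
  have h2 := Real.Gamma_pos_of_pos hc
  have h3 := Real.Gamma_pos_of_pos (by linarith : 0 < a + c)
  rw [betaFn]; positivity

lemma betaFn_rec {a c : ℝ} (ha : 0 < a) (hc : 0 < c) :
    betaFn a (c + 1) + betaFn (a + 1) c = betaFn a c := by
  have hac : (0:ℝ) < a + c := by linarith
  simp only [betaFn]
  rw [show a + (c + 1) = (a + c) + 1 by ring, show (a + 1) + c = (a + c) + 1 by ring,
    Real.Gamma_add_one hac.ne', Real.Gamma_add_one ha.ne', Real.Gamma_add_one hc.ne']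
  have h1 := (Real.Gamma_pos_of_pos ha).ne'
  have h2 := (Real.Gamma_pos_of_pos hc).ne'
  have h3 := (Real.Gamma_pos_of_pos hac).ne'
  field_simp
  ring

lemma betaFn_succ_left {a c : ℝ} (ha : 0 < a) (hc : 0 < c) :
    betaFn (a + 1) c = a / (a + c) * betaFn a c := by
  have hac : (0:ℝ) < a + c := by linarith
  simp only [betaFn]
  rw [show (a + 1) + c = (a + c) + 1 by ring, Real.Gamma_add_one hac.ne',
    Real.Gamma_add_one ha.ne']
  have h3 := (Real.Gamma_pos_of_pos hac).ne'
  field_simp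

lemma betaSum (n : ℕ) : ∀ a c : ℝ, 0 < a → 0 < c →
    ∑ k ∈ range (n + 1), (n.choose k : ℝ) * betaFn ((k : ℝ) + a) (((n - k : ℕ) : ℝ) + c)
      = betaFn a c := by
  induction n with
  | zero =>
    intro a c ha hc
    simp
  | succ n ih =>
    intro a c ha hc
    have key : ∀ j : ℕ,
        ((n+1).choose (j+1) : ℝ) * betaFn (((j+1 : ℕ) : ℝ) + a) ((((n+1) - (j+1) : ℕ) : ℝ) + c)
        = (n.choose j : ℝ) * betaFn ((j : ℝ) + (a+1)) (((n - j : ℕ) : ℝ) + c)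
          + (n.choose (j+1) : ℝ) * betaFn (((j+1 : ℕ) : ℝ) + a) (((n - j : ℕ) : ℝ) + c) := by
      intro j
      rw [Nat.succ_sub_succ, Nat.choose_succ_succ]
      have e1 : ((j:ℕ):ℝ) + 1 + a = (j:ℝ) + (a+1) := by push_cast; ring
      push_cast
      rw [e1]
      ring
    rw [Finset.sum_range_succ']
    simp only [key]
    rw [Finset.sum_add_distrib]
    have hA : ∑ j ∈ range (n+1), (n.choose j : ℝ) * betaFn ((j : ℝ) + (a+1)) (((n - j : ℕ) : ℝ) + c)
        = betaFn (a+1) c := ih (a+1) c (by linarith) hc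
    have hB : (∑ j ∈ range (n+1),
          (n.choose (j+1) : ℝ) * betaFn (((j+1 : ℕ) : ℝ) + a) (((n - j : ℕ) : ℝ) + c))
        + ((n+1).choose 0 : ℝ) * betaFn (((0:ℕ) : ℝ) + a) ((((n+1) - 0 : ℕ) : ℝ) + c)
        = betaFn a (c+1) := by
      have hg : ∀ j : ℕ, (n.choose (j+1) : ℝ) * betaFn (((j+1 : ℕ) : ℝ) + a) (((n - j : ℕ) : ℝ) + c)
          = (n.choose (j+1) : ℝ) * betaFn (((j+1 : ℕ) : ℝ) + a) ((((n+1) - (j+1) : ℕ) : ℝ) + c) := by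
        intro j; rw [Nat.succ_sub_succ]
      have hg0 : ((n+1).choose 0 : ℝ) * betaFn (((0:ℕ) : ℝ) + a) ((((n+1) - 0 : ℕ) : ℝ) + c)
          = (n.choose 0 : ℝ) * betaFn (((0:ℕ) : ℝ) + a) ((((n+1) - 0 : ℕ) : ℝ) + c) := by
        simp
      simp only [hg, hg0]
      rw [← Finset.sum_range_succ'
        (fun k => (n.choose k : ℝ) * betaFn (((k : ℕ) : ℝ) + a) ((((n+1) - k : ℕ) : ℝ) + c)) (n+1)]
      rw [Finset.sum_range_succ]
      simp only [Nat.choose_succ_self, Nat.cast_zero, zero_mul, add_zero]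
      rw [← ih a (c+1) ha (by linarith)]
      apply Finset.sum_congr rfl
      intro k hk
      rw [Finset.mem_range] at hk
      have h1 : (n+1) - k = (n - k) + 1 := by omega
      rw [h1]
      push_cast
      ring_nf
    rw [add_assoc, hA, hB, add_comm (betaFn (a+1) c) (betaFn a (c+1)), betaFn_rec ha hc]

lemma betaSum1 (n : ℕ) (a c : ℝ) (ha : 0 < a) (hc : 0 < c) :
    ∑ k ∈ range (n + 1), (k : ℝ) * (n.choose k : ℝ) * betaFn ((k : ℝ) + a) (((n - k : ℕ) : ℝ) + c)
      = n * betaFn (a+1) c := by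
  cases n with
  | zero => simp
  | succ m =>
    rw [Finset.sum_range_succ']
    simp only [Nat.cast_zero, zero_mul, add_zero]
    have key : ∀ j : ℕ, ((j+1 : ℕ) : ℝ) * ((m+1).choose (j+1) : ℝ)
          * betaFn (((j+1 : ℕ) : ℝ) + a) ((((m+1) - (j+1) : ℕ) : ℝ) + c)
        = ((m+1) : ℝ) * ((m.choose j : ℝ) * betaFn ((j : ℝ) + (a+1)) (((m - j : ℕ) : ℝ) + c)) := by
      intro j
      rw [Nat.succ_sub_succ]
      have hch : (j+1) * ((m+1).choose (j+1)) = (m+1) * (m.choose j) := by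
        simpa [mul_comm] using (Nat.add_one_mul_choose_eq m j).symm
      have hch' : ((j:ℝ)+1) * (((m+1).choose (j+1) : ℕ) : ℝ) = ((m:ℝ)+1) * ((m.choose j : ℕ) : ℝ) := by
        have := congrArg (fun x : ℕ => (x:ℝ)) hch
        push_cast at this
        linarith
      have e1 : ((j:ℕ):ℝ) + 1 + a = (j:ℝ) + (a+1) := by push_cast; ring
      push_cast
      rw [e1]
      linear_combination (betaFn ((j:ℝ) + (a+1)) (((m - j : ℕ) : ℝ) + c)) * hch'
    simp only [key]
    rw [← Finset.mul_sum, betaSum m (a+1) c (by linarith) hc]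
    push_cast
    ring

lemma betaSum2 (n : ℕ) (a c : ℝ) (ha : 0 < a) (hc : 0 < c) :
    ∑ k ∈ range (n + 1),
        (k : ℝ) * ((k : ℝ) - 1) * (n.choose k : ℝ) * betaFn ((k : ℝ) + a) (((n - k : ℕ) : ℝ) + c)
      = n * ((n : ℝ) - 1) * betaFn (a+2) c := by
  cases n with
  | zero => simp
  | succ m =>
    rw [Finset.sum_range_succ']
    simp only [Nat.cast_zero, zero_mul, add_zero]
    have key : ∀ j : ℕ, ((j+1 : ℕ) : ℝ) * (((j+1 : ℕ) : ℝ) - 1) * ((m+1).choose (j+1) : ℝ)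
          * betaFn (((j+1 : ℕ) : ℝ) + a) ((((m+1) - (j+1) : ℕ) : ℝ) + c)
        = ((m+1) : ℝ) * ((j : ℝ) * (m.choose j : ℝ)
            * betaFn ((j : ℝ) + (a+1)) (((m - j : ℕ) : ℝ) + c)) := by
      intro j
      rw [Nat.succ_sub_succ]
      have hch : (j+1) * ((m+1).choose (j+1)) = (m+1) * (m.choose j) := by
        simpa [mul_comm] using (Nat.add_one_mul_choose_eq m j).symm
      have hch' : ((j:ℝ)+1) * (((m+1).choose (j+1) : ℕ) : ℝ) = ((m:ℝ)+1) * ((m.choose j : ℕ) : ℝ) := by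
        have := congrArg (fun x : ℕ => (x:ℝ)) hch
        push_cast at this
        linarith
      have e1 : ((j:ℕ):ℝ) + 1 + a = (j:ℝ) + (a+1) := by push_cast; ring
      push_cast
      rw [e1]
      linear_combination ((j:ℝ) * betaFn ((j:ℝ) + (a+1)) (((m - j : ℕ) : ℝ) + c)) * hch'
    simp only [key]
    rw [← Finset.mul_sum, betaSum1 m (a+1) c (by linarith) hc]
    have : (a + 1) + 1 = a + 2 := by ring
    rw [this]
    push_cast
    ring

section BB

variable {a c : ℝ}

lemma betaBinomPMF_nonneg (ha : 0 < a) (hc : 0 < c) (n k : ℕ) :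
    0 ≤ betaBinomPMF n a c k := by
  have h1 : 0 < betaFn ((k : ℝ) + a) (((n - k : ℕ) : ℝ) + c) :=
    betaFn_pos (by positivity) (by positivity)
  have h2 : 0 < betaFn a c := betaFn_pos ha hc
  rw [betaBinomPMF]
  positivity

lemma betaBinomPMF_eq_zero (ha : 0 < a) (hc : 0 < c) {n k : ℕ} (h : n < k) :
    betaBinomPMF n a c k = 0 := by
  rw [betaBinomPMF, Nat.choose_eq_zero_of_lt h]
  simp

lemma bb_sum (n : ℕ) (ha : 0 < a) (hc : 0 < c) :
    ∑ k ∈ range (n + 1), betaBinomPMF n a c k = 1 := by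
  simp only [betaBinomPMF]
  rw [← Finset.sum_div, betaSum n a c ha hc, div_self (betaFn_pos ha hc).ne']

lemma bb_sum1 (n : ℕ) (ha : 0 < a) (hc : 0 < c) :
    ∑ k ∈ range (n + 1), (k : ℝ) * betaBinomPMF n a c k = n * (a / (a + c)) := by
  have step : ∑ k ∈ range (n + 1), (k : ℝ) * betaBinomPMF n a c k
      = (∑ k ∈ range (n + 1),
          (k:ℝ) * (n.choose k : ℝ) * betaFn ((k : ℝ) + a) (((n - k : ℕ) : ℝ) + c)) / betaFn a c := by
    rw [Finset.sum_div]
    apply Finset.sum_congr rfl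
    intro k _
    rw [betaBinomPMF]
    ring
  rw [step, betaSum1 n a c ha hc, betaFn_succ_left ha hc]
  have hbf := (betaFn_pos ha hc).ne'
  field_simp

lemma bb_sum2 (n : ℕ) (ha : 0 < a) (hc : 0 < c) :
    ∑ k ∈ range (n + 1), (k : ℝ) * ((k:ℝ) - 1) * betaBinomPMF n a c k
      = n * ((n:ℝ) - 1) * (a / (a + c)) * ((a + 1) / (a + c + 1)) := by
  have step : ∑ k ∈ range (n + 1), (k : ℝ) * ((k:ℝ) - 1) * betaBinomPMF n a c k
      = (∑ k ∈ range (n + 1),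
          (k:ℝ) * ((k:ℝ) - 1) * (n.choose k : ℝ)
            * betaFn ((k : ℝ) + a) (((n - k : ℕ) : ℝ) + c)) / betaFn a c := by
    rw [Finset.sum_div]
    apply Finset.sum_congr rfl
    intro k _
    rw [betaBinomPMF]
    ring
  rw [step, betaSum2 n a c ha hc]
  have h2 : betaFn (a + 2) c = (a+1) / (a + 1 + c) * (a / (a + c) * betaFn a c) := by
    rw [show a + 2 = (a + 1) + 1 by ring, betaFn_succ_left (by linarith) hc,
      betaFn_succ_left ha hc]
  rw [h2]
  have hbf := (betaFn_pos ha hc).ne'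
  field_simp
  ring

end BB

lemma nbPMF_nonneg {μ b : ℝ} (hμ : 0 < μ) (hb : 0 < b) (x : ℕ) : 0 ≤ nbPMF μ b x := by
  have h1 := Real.Gamma_pos_of_pos (show (0:ℝ) < (x:ℝ) + b by positivity)
  have h2 := Real.Gamma_pos_of_pos hb
  have h3 : (0:ℝ) < Nat.factorial x := by positivity
  have h4 : (0:ℝ) ≤ μ / (μ + b) := by positivity
  have h5 : (0:ℝ) ≤ (b / (μ + b)) ^ b := Real.rpow_nonneg (by positivity) b
  rw [nbPMF]
  positivity

/-- Variance of a fold obtained by thinning with a possibly misspecified overdispersion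
parameter `b'`: if `X ~ NB(μ, b)` and, conditional on `X = x`,
`X1 ~ BetaBinomial(x, εb', (1-ε)b')` for `b' > 0` and `ε ∈ (0,1)`, then
`Var(X1) = ε Var(X) + ε(1-ε)(μ²/b)((b+1)/(b'+1) − 1)`, where `Var(X) = μ + μ²/b`. -/
theorem nb_thinning_variance (μ b b' ε : ℝ) (hμ : 0 < μ) (hb : 0 < b) (hb' : 0 < b')
    (hε : ε ∈ Set.Ioo (0 : ℝ) 1) :
    let j : ℕ → ℕ → ℝ := fun x k => nbPMF μ b x * betaBinomPMF x (ε * b') ((1 - ε) * b') k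
    let E : (ℕ → ℕ → ℝ) → ℝ := fun g => ∑' q : ℕ × ℕ, j q.1 q.2 * g q.1 q.2
    E (fun _ k => (k : ℝ) ^ 2) - (E (fun _ k => (k : ℝ))) ^ 2 =
      ε * (μ + μ ^ 2 / b) + ε * (1 - ε) * (μ ^ 2 / b) * ((b + 1) / (b' + 1) - 1) := by
  obtain ⟨hε0, hε1⟩ := hε
  intro j E
  have hA : 0 < ε * b' := by positivity
  have hC : 0 < (1 - ε) * b' := by nlinarith
  set A : ℝ := ε * b' with hAdef
  set C : ℝ := (1 - ε) * b' with hCdef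
  set R1 : ℝ := A / (A + C) with hR1def
  set R2 : ℝ := A / (A + C) * ((A + 1) / (A + C + 1)) with hR2def
  have hj : ∀ x k, j x k = nbPMF μ b x * betaBinomPMF x A C k := fun x k => rfl
  have hjnn : ∀ x k, 0 ≤ j x k := fun x k =>
    mul_nonneg (nbPMF_nonneg hμ hb x) (betaBinomPMF_nonneg hA hC x k)
  have hzero : ∀ (x : ℕ) (f : ℕ → ℝ), ∀ k ∉ range (x + 1), j x k * f k = 0 := by
    intro x f k hk
    rw [Finset.mem_range, not_lt] at hk
    rw [hj, betaBinomPMF_eq_zero hA hC (by omega : x < k)]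
    ring
  -- fiber computations
  have fiber2 : ∀ x : ℕ, (∑' k : ℕ, j x k * ((k:ℝ)) ^ 2)
      = nbPMF μ b x * ((x:ℝ) * ((x:ℝ) - 1) * R2 + (x:ℝ) * R1) := by
    intro x
    rw [tsum_eq_sum (hzero x (fun k => (k:ℝ) ^ 2))]
    have : ∑ k ∈ range (x + 1), j x k * ((k:ℝ)) ^ 2
        = nbPMF μ b x * ∑ k ∈ range (x + 1),
            ((k:ℝ) * ((k:ℝ) - 1) * betaBinomPMF x A C k + (k:ℝ) * betaBinomPMF x A C k) := by
      rw [Finset.mul_sum]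
      apply Finset.sum_congr rfl
      intro k _
      rw [hj]
      ring
    rw [this, Finset.sum_add_distrib, bb_sum2 x hA hC, bb_sum1 x hA hC]
    rw [hR1def, hR2def]
    ring
  have fiber1 : ∀ x : ℕ, (∑' k : ℕ, j x k * ((k:ℝ)))
      = nbPMF μ b x * ((x:ℝ) * R1) := by
    intro x
    rw [tsum_eq_sum (hzero x (fun k => (k:ℝ)))]
    have : ∑ k ∈ range (x + 1), j x k * ((k:ℝ))
        = nbPMF μ b x * ∑ k ∈ range (x + 1), (k:ℝ) * betaBinomPMF x A C k := by
      rw [Finset.mul_sum]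
      apply Finset.sum_congr rfl
      intro k _
      rw [hj]
      ring
    rw [this, bb_sum1 x hA hC, hR1def]
  have fibSummable : ∀ (f : ℕ → ℝ) (x : ℕ), Summable (fun k => j x k * f k) :=
    fun f x => summable_of_ne_finset_zero (hzero x f)
  -- total sums
  have hS2 : HasSum (fun x : ℕ => nbPMF μ b x * ((x:ℝ) * ((x:ℝ) - 1) * R2 + (x:ℝ) * R1))
      (R2 * ((b + 1) * μ ^ 2 / b) + R1 * μ) := by
    apply (((nb_hasSum_sq hμ hb).mul_left R2).add ((nb_hasSum_id hμ hb).mul_left R1)).congr_fun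
    intro x
    ring
  have hS1 : HasSum (fun x : ℕ => nbPMF μ b x * ((x:ℝ) * R1)) (R1 * μ) := by
    apply ((nb_hasSum_id hμ hb).mul_left R1).congr_fun
    intro x
    ring
  have hsum2 : Summable (fun q : ℕ × ℕ => j q.1 q.2 * ((q.2:ℝ)) ^ 2) := by
    rw [summable_prod_of_nonneg (fun q => mul_nonneg (hjnn q.1 q.2) (by positivity))]
    exact ⟨fun x => fibSummable _ x, hS2.summable.congr fun x => (fiber2 x).symm⟩
  have hsum1 : Summable (fun q : ℕ × ℕ => j q.1 q.2 * ((q.2:ℝ))) := by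
    rw [summable_prod_of_nonneg (fun q => mul_nonneg (hjnn q.1 q.2) (by positivity))]
    exact ⟨fun x => fibSummable _ x, hS1.summable.congr fun x => (fiber1 x).symm⟩
  have E2 : E (fun _ k => (k : ℝ) ^ 2) = R2 * ((b + 1) * μ ^ 2 / b) + R1 * μ := by
    show (∑' q : ℕ × ℕ, j q.1 q.2 * ((q.2:ℝ)) ^ 2) = _
    rw [Summable.tsum_prod' hsum2 (fun x => fibSummable _ x)]
    rw [tsum_congr fiber2]
    exact hS2.tsum_eq
  have E1 : E (fun _ k => (k : ℝ)) = R1 * μ := by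
    show (∑' q : ℕ × ℕ, j q.1 q.2 * ((q.2:ℝ))) = _
    rw [Summable.tsum_prod' hsum1 (fun x => fibSummable _ x)]
    rw [tsum_congr fiber1]
    exact hS1.tsum_eq
  rw [E2, E1, hR2def, hR1def, hAdef, hCdef]
  have h1 : ε * b' + (1 - ε) * b' = b' := by ring
  rw [h1]
  have hb'1 : b' + 1 ≠ 0 := by positivity
  field_simp
  ring
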